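/- Let ψ be a continuously differentiable L-periodic solution of the reduced-order equation D (ψ³ - ψ)' + v(ψ - c₀) + f₀ sin(kη) = 0 with D, v > 0, f₀ ≥ 0. Then every value of ψ lies in the interval [c₀ - f₀/v, c₀ + f₀/v]. -/

import Mathlib

theorem stmt2 (D v f₀ L k c₀ : ℝ) (hD : 0 < D) (hv : 0 < v) (hf : 0 ≤ f₀) (hL : 0 < L)
    (hk : k = 2 * Real.pi / L) (ψ : ℝ → ℝ) (hC1 : ContDiff ℝ 1 ψ)
    (hper : ∀ η, ψ (η + L) = ψ η)
    (hc₀ : c₀ = (1 / L) * ∫ η in (0:ℝ)..L, ψ η)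
    (hode : ∀ η, D * deriv (fun x => ψ x ^ 3 - ψ x) η + v * (ψ η - c₀)
      + f₀ * Real.sin (k * η) = 0) :
    ∀ η, ψ η ∈ Set.Icc (c₀ - f₀ / v) (c₀ + f₀ / v) := by
  have hψd : Differentiable ℝ ψ := hC1.differentiable one_ne_zero
  have hcont : Continuous ψ := hψd.continuous
  have hperi : Function.Periodic ψ L := hper
  -- global max
  obtain ⟨a, ha, hmax⟩ := isCompact_Icc.exists_isMaxOn (Set.nonempty_Icc.2 hL.le)
    hcont.continuousOn
  obtain ⟨b, hb, hmin⟩ := isCompact_Icc.exists_isMinOn (Set.nonempty_Icc.2 hL.le)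
    hcont.continuousOn
  have hgmax : ∀ x, ψ x ≤ ψ a := by
    intro x
    obtain ⟨y, hy, hxy⟩ := hperi.exists_mem_Ico₀ hL x
    rw [hxy]
    exact hmax (Set.mem_Icc_of_Ico hy)
  have hgmin : ∀ x, ψ b ≤ ψ x := by
    intro x
    obtain ⟨y, hy, hxy⟩ := hperi.exists_mem_Ico₀ hL x
    rw [hxy]
    exact hmin (Set.mem_Icc_of_Ico hy)
  have dmax : deriv ψ a = 0 :=
    IsLocalMax.deriv_eq_zero (Filter.Eventually.of_forall hgmax)
  have dmin : deriv ψ b = 0 :=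
    IsLocalMin.deriv_eq_zero (Filter.Eventually.of_forall hgmin)
  have key : ∀ c, deriv ψ c = 0 → v * (ψ c - c₀) + f₀ * Real.sin (k * c) = 0 := by
    intro c hc
    have h1 : HasDerivAt (fun x => ψ x ^ 3 - ψ x)
        ((3 : ℕ) * ψ c ^ 2 * deriv ψ c - deriv ψ c) c := by
      have := ((hψd c).hasDerivAt.pow 3).sub (hψd c).hasDerivAt
      exact this
    have h2 : deriv (fun x => ψ x ^ 3 - ψ x) c = 0 := by
      rw [h1.deriv, hc]; ring
    have := hode c
    rw [h2] at this
    linarith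
  have hA := key a dmax
  have hB := key b dmin
  intro η
  have hsa := Real.neg_one_le_sin (k * a)
  have hsb := Real.sin_le_one (k * b)
  have hub : ψ a ≤ c₀ + f₀ / v := by
    rw [← sub_nonneg]
    have : v * (c₀ + f₀ / v - ψ a) = f₀ + f₀ * Real.sin (k * a) := by
      field_simp; linarith
    nlinarith [mul_nonneg hf (by linarith : (0:ℝ) ≤ 1 + Real.sin (k * a))]
  have hlb : c₀ - f₀ / v ≤ ψ b := by
    rw [← sub_nonneg]
    have : v * (ψ b - (c₀ - f₀ / v)) = f₀ - f₀ * Real.sin (k * b) := by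
      field_simp; linarith
    nlinarith [mul_nonneg hf (by linarith : (0:ℝ) ≤ 1 - Real.sin (k * b))]
  exact ⟨le_trans hlb (hgmin η), le_trans (hgmax η) hub⟩
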